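/- For ε-approximately bisimilar systems T₁ ∼_ε T₂ via R, the time-optimal value functions for ε-contracted/expanded specifications transfer across R: for all (q₁, q₂) ∈ R, J*(T₁, O_s, O_t, q₁) ≤ J*(T₂, C_ε(O_s), C_ε(O_t), q₂) and J*(T₂, E_ε(O_s), E_ε(O_t), q₂) ≤ J*(T₁, O_s, O_t, q₁). -/

import Mathlib

open Set

/-- φ-contraction of a set in a metric space. -/
def contr {O : Type*} [MetricSpace O] (φ : ℝ) (s : Set O) : Set O :=
  {o' | o' ∈ s ∧ ∀ o : O, dist o o' ≤ φ → o ∈ s}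

/-- φ-expansion of a set in a metric space. -/
def expan {O : Type*} [MetricSpace O] (φ : ℝ) (s : Set O) : Set O :=
  {o : O | ∃ o' ∈ s, dist o o' ≤ φ}

/-- Enabled actions of a transition system given by δ. -/
def Enab {Q L : Type*} (δ : Q → L → Set Q) (q : Q) : Set L := {l | (δ q l).Nonempty}

/-- A trajectory of length N of the controlled system T_S. -/
def IsTraj {Q L : Type*} (δ : Q → L → Set Q) (S : Q → Set L) (N : ℕ)
    (q : ℕ → Q) (l : ℕ → L) : Prop :=
  ∀ i < N, l i ∈ S (q i) ∧ q (i + 1) ∈ δ (q i) (l i)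

/-- ε-approximate bisimulation relation. -/
def ApproxBisim {Q₁ Q₂ L O : Type*} [MetricSpace O] (ε : ℝ)
    (δ₁ : Q₁ → L → Set Q₁) (H₁ : Q₁ → O)
    (δ₂ : Q₂ → L → Set Q₂) (H₂ : Q₂ → O) (R : Set (Q₁ × Q₂)) : Prop :=
  ∀ p ∈ R, dist (H₁ p.1) (H₂ p.2) ≤ ε ∧
    (∀ l : L, ∀ q₁' ∈ δ₁ p.1 l, ∃ q₂' ∈ δ₂ p.2 l, (q₁', q₂') ∈ R) ∧
    (∀ l : L, ∀ q₂' ∈ δ₂ p.2 l, ∃ q₁' ∈ δ₁ p.1 l, (q₁', q₂') ∈ R)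

/-- Safety controller (characterization of Lemma 3.1). -/
def SafetyController {Q L O : Type*} (δ : Q → L → Set Q) (H : Q → O)
    (S : Q → Set L) (Os : Set O) : Prop :=
  ∀ q : Q, (S q).Nonempty → H q ∈ Os ∧ ∀ l ∈ S q, ∀ q' ∈ δ q l, (S q').Nonempty

/-- The reachability condition on a trajectory of length N. -/
def Reached {Q O : Type*} (H : Q → O) (Os Ot : Set O) (N : ℕ) (q : ℕ → Q) : Prop :=
  ∃ K ≤ N, (∀ k ≤ K, H (q k) ∈ Os) ∧ H (q K) ∈ Ot

/-- Entry time of the controlled system T_S from q₀ for specification (Os, Ot). -/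
noncomputable def entryTime {Q L O : Type*} (δ : Q → L → Set Q) (S : Q → Set L)
    (H : Q → O) (Os Ot : Set O) (q₀ : Q) : ℕ∞ :=
  sInf {n : ℕ∞ | ∃ N : ℕ, n = (N : ℕ∞) ∧
    ∀ (q : ℕ → Q) (l : ℕ → L), q 0 = q₀ → IsTraj δ S N q l → Reached H Os Ot N q}

/-- An everywhere non-empty, well-defined controller. -/
def IsController {Q L : Type*} (δ : Q → L → Set Q) (S : Q → Set L) : Prop :=
  (∀ q, (S q).Nonempty) ∧ ∀ q, S q ⊆ Enab δ q

/-- Time-optimal controller for reachability specification (Os, Ot). -/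
def TimeOptimal {Q L O : Type*} (δ : Q → L → Set Q) (H : Q → O) (S : Q → Set L)
    (Os Ot : Set O) : Prop :=
  IsController δ S ∧ ∀ S' : Q → Set L, IsController δ S' →
    ∀ q, entryTime δ S H Os Ot q ≤ entryTime δ S' H Os Ot q

/-- Maximal safety controller. -/
def MaximalSafety {Q L O : Type*} (δ : Q → L → Set Q) (H : Q → O) (S : Q → Set L)
    (Os : Set O) : Prop :=
  SafetyController δ H S Os ∧
    ∀ S' : Q → Set L, SafetyController δ H S' Os → ∀ q, S' q ⊆ S q

/-- ε-approximate bisimilarity of two transition systems. -/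
def ApproxBisimilar {Q₁ Q₂ L O : Type*} [MetricSpace O] (ε : ℝ)
    (δ₁ : Q₁ → L → Set Q₁) (H₁ : Q₁ → O)
    (δ₂ : Q₂ → L → Set Q₂) (H₂ : Q₂ → O) : Prop :=
  ∃ R : Set (Q₁ × Q₂), ApproxBisim ε δ₁ H₁ δ₂ H₂ R ∧
    (∀ q₁, ∃ q₂, (q₁, q₂) ∈ R) ∧ (∀ q₂, ∃ q₁, (q₁, q₂) ∈ R)

section AuxTransfer

variable {Q QA QB L O : Type*}

/-- All trajectories of length `N` from `q₀` satisfy the reachability condition. -/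
def AllReach (δ : Q → L → Set Q) (S : Q → Set L) (H : Q → O) (Os Ot : Set O)
    (N : ℕ) (q₀ : Q) : Prop :=
  ∀ (q : ℕ → Q) (l : ℕ → L), q 0 = q₀ → IsTraj δ S N q l → Reached H Os Ot N q

lemma allReach_succ {δ : Q → L → Set Q} {S : Q → Set L} {H : Q → O} {Os Ot : Set O}
    {n : ℕ} {q₀ : Q} (h : AllReach δ S H Os Ot n q₀) :
    AllReach δ S H Os Ot (n + 1) q₀ := by
  intro q l h0 htraj
  obtain ⟨K, hK, hs, ht⟩ := h q l h0 (fun i hi => htraj i (hi.trans (Nat.lt_succ_self n)))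
  exact ⟨K, hK.trans (Nat.le_succ n), hs, ht⟩

lemma allReach_mono {δ : Q → L → Set Q} {S : Q → Set L} {H : Q → O} {Os Ot : Set O}
    {m n : ℕ} (hmn : m ≤ n) {q₀ : Q} (h : AllReach δ S H Os Ot m q₀) :
    AllReach δ S H Os Ot n q₀ := by
  induction hmn with
  | refl => exact h
  | step _ ih => exact allReach_succ ih

lemma allReach_target {δ : Q → L → Set Q} {S : Q → Set L} {H : Q → O} {Os Ot : Set O}
    (hOts : Ot ⊆ Os) {q₀ : Q} (h : H q₀ ∈ Ot) (N : ℕ) :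
    AllReach δ S H Os Ot N q₀ := by
  intro q l h0 _
  refine ⟨0, Nat.zero_le _, ?_, by rwa [h0]⟩
  intro k hk
  have : k = 0 := Nat.le_zero.mp hk
  subst this
  rw [h0]; exact hOts h

lemma allReach_step {δ : Q → L → Set Q} {S : Q → Set L} {H : Q → O} {Os Ot : Set O}
    (hOts : Ot ⊆ Os) {q₀ : Q} {n : ℕ} (hs : H q₀ ∈ Os)
    (hsucc : ∀ l ∈ S q₀, ∀ q' ∈ δ q₀ l, AllReach δ S H Os Ot n q') :
    AllReach δ S H Os Ot (n + 1) q₀ := by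
  by_cases ht : H q₀ ∈ Ot
  · exact allReach_target hOts ht (n + 1)
  intro q l h0 htraj
  have h01 := htraj 0 (Nat.succ_pos n)
  have hq1 : q 1 ∈ δ q₀ (l 0) := by rw [← h0]; exact h01.2
  have hl0 : l 0 ∈ S q₀ := by rw [← h0]; exact h01.1
  have htraj' : IsTraj δ S n (fun i => q (i + 1)) (fun i => l (i + 1)) := by
    intro i hi
    exact htraj (i + 1) (Nat.succ_lt_succ hi)
  obtain ⟨K, hK, hsafe, htgt⟩ := hsucc (l 0) hl0 (q 1) hq1 (fun i => q (i + 1))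
    (fun i => l (i + 1)) rfl htraj'
  refine ⟨K + 1, Nat.succ_le_succ hK, ?_, htgt⟩
  intro k hk
  match k with
  | 0 => rw [h0]; exact hs
  | j + 1 => exact hsafe j (Nat.succ_le_succ_iff.mp hk)

lemma exists_traj {δ : Q → L → Set Q} {S : Q → Set L} (hS : IsController δ S)
    (q₀ : Q) (n : ℕ) : ∃ (q : ℕ → Q) (l : ℕ → L), q 0 = q₀ ∧ IsTraj δ S n q l := by
  classical
  have hl : ∀ q : Q, ∃ l, l ∈ S q ∧ (δ q l).Nonempty :=
    fun q => (hS.1 q).imp fun l hl => ⟨hl, hS.2 q hl⟩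
  choose lp hlp hne using hl
  choose np hnp using hne
  refine ⟨fun i => Nat.rec q₀ (fun _ p => np p) i,
    fun i => lp (Nat.rec q₀ (fun _ p => np p) i), rfl, ?_⟩
  intro i _
  exact ⟨hlp _, hnp _⟩

lemma allReach_inv_target {δ : Q → L → Set Q} {S : Q → Set L} {H : Q → O} {Os Ot : Set O}
    (hS : IsController δ S) {q₀ : Q} (h : AllReach δ S H Os Ot 0 q₀) : H q₀ ∈ Ot := by
  obtain ⟨q, l, h0, ht⟩ := exists_traj hS q₀ 0
  obtain ⟨K, hK, _, htgt⟩ := h q l h0 ht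
  have : K = 0 := Nat.le_zero.mp hK
  subst this
  rwa [h0] at htgt

lemma allReach_inv {δ : Q → L → Set Q} {S : Q → Set L} {H : Q → O} {Os Ot : Set O}
    (hS : IsController δ S) {q₀ : Q} {n : ℕ} (h : AllReach δ S H Os Ot (n + 1) q₀)
    (hnt : H q₀ ∉ Ot) :
    H q₀ ∈ Os ∧ ∀ l ∈ S q₀, ∀ q' ∈ δ q₀ l, AllReach δ S H Os Ot n q' := by
  constructor
  · obtain ⟨q, l, h0, ht⟩ := exists_traj hS q₀ (n + 1)
    obtain ⟨K, _, hsafe, _⟩ := h q l h0 ht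
    have := hsafe 0 (Nat.zero_le K)
    rwa [h0] at this
  · intro l hl q' hq' q'' l'' h0'' ht''
    set qq : ℕ → Q := fun i => Nat.casesOn i q₀ q'' with hqq
    set ll : ℕ → L := fun i => Nat.casesOn i l l'' with hll
    have htraj : IsTraj δ S (n + 1) qq ll := by
      intro i hi
      match i with
      | 0 => exact ⟨hl, by simpa [hqq, hll, h0''] using hq'⟩
      | j + 1 => exact ht'' j (Nat.succ_lt_succ_iff.mp hi)
    obtain ⟨K, hK, hsafe, htgt⟩ := h qq ll rfl htraj
    match K, hK with
    | 0, _ => exact absurd htgt hnt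
    | K' + 1, hK =>
      refine ⟨K', Nat.succ_le_succ_iff.mp hK, ?_, htgt⟩
      intro k hk
      exact hsafe (k + 1) (Nat.succ_le_succ hk)

/-- The pullback of a controller across a simulation-type relation, and the
resulting comparison between entry times. -/
lemma entryTime_pullback (δA : QA → L → Set QA) (HA : QA → O)
    (δB : QB → L → Set QB) (HB : QB → O) (R' : Set (QA × QB)) (SB : QB → Set L)
    (OsA OtA OsB OtB : Set O) (hOts : OtA ⊆ OsA)
    (htgt : ∀ p ∈ R', HB p.2 ∈ OtB → HA p.1 ∈ OtA)
    (hsafe : ∀ p ∈ R', HB p.2 ∈ OsB → HA p.1 ∈ OsA)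
    (hsim₁ : ∀ p ∈ R', ∀ l : L, ∀ qA' ∈ δA p.1 l, ∃ qB' ∈ δB p.2 l, (qA', qB') ∈ R')
    (hsim₂ : ∀ p ∈ R', ∀ l : L, ∀ qB' ∈ δB p.2 l, ∃ qA' ∈ δA p.1 l, (qA', qB') ∈ R')
    (htot : ∀ qA, ∃ qB, (qA, qB) ∈ R') (hSB : IsController δB SB) :
    ∃ SA : QA → Set L, IsController δA SA ∧ ∀ p ∈ R',
      entryTime δA SA HA OsA OtA p.1 ≤ entryTime δB SB HB OsB OtB p.2 := by
  classical
  set Ns : QA → Set ℕ :=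
    fun qA => {n | ∃ qB, (qA, qB) ∈ R' ∧ AllReach δB SB HB OsB OtB n qB} with hNs
  have hf : ∀ qA, ∃ qB, (qA, qB) ∈ R' ∧
      ∀ n ∈ Ns qA, AllReach δB SB HB OsB OtB n qB := by
    intro qA
    by_cases h : (Ns qA).Nonempty
    · obtain ⟨qB, hqB, hAR⟩ := Nat.sInf_mem h
      exact ⟨qB, hqB, fun n hn => allReach_mono (Nat.sInf_le hn) hAR⟩
    · obtain ⟨qB, hqB⟩ := htot qA
      exact ⟨qB, hqB, fun n hn => absurd ⟨n, hn⟩ h⟩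
  choose f hfR hfP using hf
  refine ⟨fun qA => SB (f qA), ⟨fun qA => hSB.1 (f qA), ?_⟩, ?_⟩
  · intro qA l hl
    obtain ⟨qB', hqB'⟩ := hSB.2 (f qA) hl
    obtain ⟨qA', hqA', _⟩ := hsim₂ (qA, f qA) (hfR qA) l qB' hqB'
    exact ⟨qA', hqA'⟩
  · have main : ∀ n : ℕ, ∀ qA qB, (qA, qB) ∈ R' → AllReach δB SB HB OsB OtB n qB →
        AllReach δA (fun qA => SB (f qA)) HA OsA OtA n qA := by
      intro n
      induction n with
      | zero =>
        intro qA qB hRp hAR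
        have hfn : AllReach δB SB HB OsB OtB 0 (f qA) := hfP qA 0 ⟨qB, hRp, hAR⟩
        exact allReach_target hOts
          (htgt (qA, f qA) (hfR qA) (allReach_inv_target hSB hfn)) 0
      | succ m ih =>
        intro qA qB hRp hAR
        have hfn : AllReach δB SB HB OsB OtB (m + 1) (f qA) :=
          hfP qA (m + 1) ⟨qB, hRp, hAR⟩
        by_cases ht : HB (f qA) ∈ OtB
        · exact allReach_target hOts (htgt (qA, f qA) (hfR qA) ht) (m + 1)
        · obtain ⟨hOs, hsucc⟩ := allReach_inv hSB hfn ht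
          refine allReach_step hOts (hsafe (qA, f qA) (hfR qA) hOs) ?_
          intro l hl qA' hqA'
          obtain ⟨qB', hqB', hR'⟩ := hsim₁ (qA, f qA) (hfR qA) l qA' hqA'
          exact ih qA' qB' hR' (hsucc l hl qB' hqB')
    intro p hp
    refine le_sInf ?_
    rintro x ⟨N, rfl, hARB⟩
    exact sInf_le ⟨N, rfl, main N p.1 p.2 hp hARB⟩

end AuxTransfer

theorem value_function_transfer {Q₁ Q₂ L O : Type*} [MetricSpace O]
    (ε : ℝ) (hε : 0 ≤ ε) (δ₁ : Q₁ → L → Set Q₁) (H₁ : Q₁ → O)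
    (δ₂ : Q₂ → L → Set Q₂) (H₂ : Q₂ → O) (R : Set (Q₁ × Q₂))
    (hR : ApproxBisim ε δ₁ H₁ δ₂ H₂ R)
    (hRtot₁ : ∀ q₁, ∃ q₂, (q₁, q₂) ∈ R) (hRtot₂ : ∀ q₂, ∃ q₁, (q₁, q₂) ∈ R)
    (hnb₁ : ∀ q : Q₁, ∃ l : L, (δ₁ q l).Nonempty)
    (hnb₂ : ∀ q : Q₂, ∃ l : L, (δ₂ q l).Nonempty)
    (Os Ot : Set O) (hOts : Ot ⊆ Os)
    (S₁ : Q₁ → Set L) (hS₁ : TimeOptimal δ₁ H₁ S₁ Os Ot)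
    (S₂C : Q₂ → Set L) (hS₂C : TimeOptimal δ₂ H₂ S₂C (contr ε Os) (contr ε Ot))
    (S₂E : Q₂ → Set L) (hS₂E : TimeOptimal δ₂ H₂ S₂E (expan ε Os) (expan ε Ot)) :
    ∀ p ∈ R,
      entryTime δ₁ S₁ H₁ Os Ot p.1 ≤
        entryTime δ₂ S₂C H₂ (contr ε Os) (contr ε Ot) p.2 ∧
      entryTime δ₂ S₂E H₂ (expan ε Os) (expan ε Ot) p.2 ≤
        entryTime δ₁ S₁ H₁ Os Ot p.1 := by
  intro p hp
  constructor
  · -- T₁ ≤ T₂ with contracted specifications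
    obtain ⟨SA, hSAc, hle⟩ := entryTime_pullback δ₁ H₁ δ₂ H₂ R S₂C
      Os Ot (contr ε Os) (contr ε Ot) hOts
      (fun p hp h => h.2 (H₁ p.1) (hR p hp).1)
      (fun p hp h => h.2 (H₁ p.1) (hR p hp).1)
      (fun p hp => (hR p hp).2.1)
      (fun p hp => (hR p hp).2.2)
      hRtot₁ hS₂C.1
    exact le_trans (hS₁.2 SA hSAc p.1) (hle p hp)
  · -- T₂ with expanded specifications ≤ T₁
    obtain ⟨SA, hSAc, hle⟩ := entryTime_pullback δ₂ H₂ δ₁ H₁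
      {p : Q₂ × Q₁ | (p.2, p.1) ∈ R} S₁
      (expan ε Os) (expan ε Ot) Os Ot
      (fun o ⟨o', ho', hd⟩ => ⟨o', hOts ho', hd⟩)
      (fun p hp h => ⟨H₁ p.2, h, by
        have := (hR (p.2, p.1) hp).1; rwa [dist_comm] at this⟩)
      (fun p hp h => ⟨H₁ p.2, h, by
        have := (hR (p.2, p.1) hp).1; rwa [dist_comm] at this⟩)
      (fun p hp l q₂' hq₂' => by
        obtain ⟨q₁', hq₁', hmem⟩ := (hR (p.2, p.1) hp).2.2 l q₂' hq₂'
        exact ⟨q₁', hq₁', hmem⟩)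
      (fun p hp l q₁' hq₁' => by
        obtain ⟨q₂', hq₂', hmem⟩ := (hR (p.2, p.1) hp).2.1 l q₁' hq₁'
        exact ⟨q₂', hq₂', hmem⟩)
      hRtot₂ hS₁.1
    exact le_trans (hS₂E.2 SA hSAc p.2) (hle (p.2, p.1) hp)
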